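/- Let d ≥ 1 and let n₁, …, n_d be positive integers. For M > 0 define the polynomial p_M(z) = M·(z−1)^{n₁}·(z−2)^{n₂}⋯(z−d)^{n_d}. Then for all sufficiently large M, the compact set P_M = {z ∈ ℂ : |p_M(z)| ≤ 1} has exactly d connected components, and each connected component contains exactly one of the points 1, 2, …, d. -/

import Mathlib

open Metric Set

private lemma s15_lemA {p : ℂ → ℂ} (hp : Differentiable ℂ p) {z₀ z : ℂ}
    (h0 : p z₀ = 0) (hz : ‖p z‖ = 1) {δ : ℝ} (hδ : 0 < δ) :
    ∃ z', dist z' z < δ ∧ ‖p z'‖ < 1 := by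
  have ha : AnalyticOnNhd ℂ p univ := hp.differentiableOn.analyticOnNhd isOpen_univ
  rcases (ha z (mem_univ z)).eventually_constant_or_nhds_le_map_nhds with h | h
  · exfalso
    have heq : EqOn p (fun _ => p z) univ :=
      ha.eqOn_of_preconnected_of_eventuallyEq analyticOnNhd_const isPreconnected_univ
        (mem_univ z) h
    have h0' := heq (mem_univ z₀)
    simp only [h0] at h0'
    rw [← h0', norm_zero] at hz
    norm_num at hz
  · have himg : p '' (Metric.ball z δ) ∈ nhds (p z) :=
      h (Filter.image_mem_map (Metric.ball_mem_nhds z hδ))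
    rcases Metric.mem_nhds_iff.mp himg with ⟨ε, hε, hball⟩
    set t : ℝ := min (ε / 2) (1 / 2) with ht
    have ht0 : 0 < t := lt_min (by linarith) (by norm_num)
    have htε : t < ε := lt_of_le_of_lt (min_le_left _ _) (by linarith)
    have ht1 : t < 1 := lt_of_le_of_lt (min_le_right _ _) (by norm_num)
    have hw : (1 - (t : ℂ)) * p z ∈ Metric.ball (p z) ε := by
      rw [Metric.mem_ball, dist_eq_norm]
      have : (1 - (t : ℂ)) * p z - p z = -((t : ℂ) * p z) := by ring
      rw [this, norm_neg, norm_mul, hz, mul_one]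
      calc ‖((t : ℝ) : ℂ)‖ = |t| := by rw [Complex.norm_real, Real.norm_eq_abs]
        _ = t := abs_of_pos ht0
        _ < ε := htε
    rcases hball hw with ⟨z', hz', hpz'⟩
    refine ⟨z', Metric.mem_ball.mp hz', ?_⟩
    rw [hpz', norm_mul, hz, mul_one]
    have : (1 : ℂ) - (t : ℂ) = ((1 - t : ℝ) : ℂ) := by push_cast; ring
    rw [this, Complex.norm_real, Real.norm_eq_abs, abs_of_pos (by linarith)]
    linarith

private lemma s15_lemB {p : ℂ → ℂ} (hp : Differentiable ℂ p)
    (hb : Bornology.IsBounded {z : ℂ | ‖p z‖ < 1}) {x : ℂ} (hx : ‖p x‖ < 1) :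
    ∃ w ∈ closure (connectedComponentIn {z : ℂ | ‖p z‖ < 1} x), p w = 0 := by
  set U := {z : ℂ | ‖p z‖ < 1} with hUdef
  by_contra hno
  push_neg at hno
  set V := connectedComponentIn U x with hV
  have hUopen : IsOpen U := isOpen_lt hp.continuous.norm continuous_const
  have hVU : V ⊆ U := connectedComponentIn_subset U x
  have hxV : x ∈ V := mem_connectedComponentIn hx
  have hVopen : IsOpen V := hUopen.connectedComponentIn
  have hclU : closure V ⊆ {z : ℂ | ‖p z‖ ≤ 1} := by
    refine (closure_mono hVU).trans (closure_minimal (fun z hz => show ‖p z‖ ≤ 1 from le_of_lt hz) ?_)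
    exact isClosed_le hp.continuous.norm continuous_const
  have hfr : ∀ y ∈ frontier V, ‖(p y)⁻¹‖ ≤ 1 := by
    intro y hy
    rw [hVopen.frontier_eq] at hy
    obtain ⟨hyc, hynotV⟩ := hy
    have hyU : y ∉ U := by
      intro hyU
      have hopen : IsOpen (connectedComponentIn U y) := hUopen.connectedComponentIn
      obtain ⟨v, hv1, hv2⟩ :=
        _root_.mem_closure_iff.mp hyc _ hopen (mem_connectedComponentIn hyU)
      have e1 := connectedComponentIn_eq hv1
      have e2 := connectedComponentIn_eq (hv2 : v ∈ V)
      exact hynotV (by rw [hV, e2, ← e1]; exact mem_connectedComponentIn hyU)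
    have h1 : ‖p y‖ ≤ 1 := hclU hyc
    have h2 : 1 ≤ ‖p y‖ := not_lt.mp hyU
    rw [norm_inv]
    exact inv_le_one_of_one_le₀ h2
  have hdiff : DiffContOnCl ℂ (fun w => (p w)⁻¹) V := by
    constructor
    · intro w hw
      exact ((hp w).inv (hno w (subset_closure hw))).differentiableWithinAt
    · exact ContinuousOn.inv₀ hp.continuous.continuousOn (fun w hw => hno w hw)
  have hVb : Bornology.IsBounded V := hb.subset hVU
  have hle := Complex.norm_le_of_forall_mem_frontier_norm_le hVb hdiff hfr
    (subset_closure hxV)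
  have hpx : p x ≠ 0 := hno x (subset_closure hxV)
  rw [norm_inv] at hle
  have h0 : 0 < ‖p x‖ := norm_pos_iff.mpr hpx
  have h1 : 1 ≤ ‖p x‖ := by
    calc (1 : ℝ) = ‖p x‖⁻¹ * ‖p x‖ := (inv_mul_cancel₀ (ne_of_gt h0)).symm
      _ ≤ 1 * ‖p x‖ := mul_le_mul_of_nonneg_right hle h0.le
      _ = ‖p x‖ := one_mul _
  have : ‖p x‖ < 1 := hx
  linarith

private lemma s15_main {d : ℕ} {p : ℂ → ℂ} {c : Fin d → ℂ} {r : ℝ} (hr : 0 < r)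
    (hp : Differentiable ℂ p)
    (h1 : ∀ j, p (c j) = 0)
    (h2 : ∀ z : ℂ, ‖p z‖ ≤ 1 → ∃ j, z ∈ Metric.ball (c j) r)
    (h3 : ∀ j k : Fin d, j ≠ k → 2 * r ≤ dist (c j) (c k))
    (h4 : ∀ w : ℂ, p w = 0 → ∃ j, w = c j)
    (hb : Bornology.IsBounded {z : ℂ | ‖p z‖ ≤ 1}) :
    ({C : Set ℂ | ∃ z ∈ {z : ℂ | ‖p z‖ ≤ 1},
        C = connectedComponentIn {z : ℂ | ‖p z‖ ≤ 1} z}).ncard = d ∧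
    ∀ z ∈ {z : ℂ | ‖p z‖ ≤ 1},
      ∃! j : Fin d, c j ∈ connectedComponentIn {z : ℂ | ‖p z‖ ≤ 1} z := by
  classical
  set S := {z : ℂ | ‖p z‖ ≤ 1} with hS
  set U := {z : ℂ | ‖p z‖ < 1} with hU
  have hUopen : IsOpen U := isOpen_lt hp.continuous.norm continuous_const
  have hUS : U ⊆ S := fun z hz => show ‖p z‖ ≤ 1 from le_of_lt hz
  have hUb : Bornology.IsBounded U := hb.subset hUS
  have hcb : ∀ j, c j ∈ Metric.ball (c j) r := fun j => Metric.mem_ball_self hr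
  have hcU : ∀ j, c j ∈ U := fun j => by simp [hU, h1 j]
  have hcS : ∀ j, c j ∈ S := fun j => hUS (hcU j)
  have hball_ne : ∀ j k : Fin d, c k ∈ Metric.ball (c j) r → k = j := by
    intro j k hk
    by_contra hne
    have hd1 := h3 k j hne
    have hd2 : dist (c k) (c j) < r := Metric.mem_ball.mp hk
    linarith
  -- a preconnected subset of S meeting a ball is contained in it
  have hsub : ∀ T : Set ℂ, T ⊆ S → IsPreconnected T →
      ∀ j, ∀ x ∈ T, x ∈ Metric.ball (c j) r → T ⊆ Metric.ball (c j) r := by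
    intro T hTS hT j x hxT hxB
    by_contra hnot
    rw [Set.not_subset] at hnot
    obtain ⟨y, hyT, hyB⟩ := hnot
    obtain ⟨k, hk⟩ := h2 y (hTS hyT)
    have hkj : k ≠ j := fun h => hyB (h ▸ hk)
    have hcover : T ⊆ Metric.ball (c j) r ∪ ⋃ k' ∈ {k' : Fin d | k' ≠ j}, Metric.ball (c k') r := by
      intro w hw
      obtain ⟨k', hk'⟩ := h2 w (hTS hw)
      by_cases hkj' : k' = j
      · exact Or.inl (hkj' ▸ hk')
      · exact Or.inr (Set.mem_biUnion hkj' hk')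
    obtain ⟨w, hwT, hw1, hw2⟩ := hT (Metric.ball (c j) r)
      (⋃ k' ∈ {k' : Fin d | k' ≠ j}, Metric.ball (c k') r) Metric.isOpen_ball
      (isOpen_biUnion fun _ _ => Metric.isOpen_ball) hcover
      ⟨x, hxT, hxB⟩ ⟨y, hyT, Set.mem_biUnion hkj hk⟩
    obtain ⟨k', hk'ne, hwk'⟩ := Set.mem_iUnion₂.mp hw2
    have hdisj : Disjoint (Metric.ball (c j) r) (Metric.ball (c k') r) :=
      Metric.ball_disjoint_ball (by have := h3 j k' (Ne.symm hk'ne); linarith)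
    exact (Set.disjoint_left.mp hdisj hw1) hwk'
  -- each component of U in a ball contains its centre
  have compU : ∀ x ∈ U, ∀ j, x ∈ Metric.ball (c j) r → c j ∈ connectedComponentIn U x := by
    intro x hxU j hxB
    have hVU : connectedComponentIn U x ⊆ U := connectedComponentIn_subset U x
    have hVx : x ∈ connectedComponentIn U x := mem_connectedComponentIn hxU
    have hVball : connectedComponentIn U x ⊆ Metric.ball (c j) r :=
      hsub _ (hVU.trans hUS) isPreconnected_connectedComponentIn j x hVx hxB
    obtain ⟨w, hwV, hw0⟩ := s15_lemB hp hUb hxU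
    obtain ⟨k, rfl⟩ := h4 w hw0
    have hkj : k = j := by
      by_contra hne
      have h1' := h3 k j hne
      have h2' : c k ∈ closure (Metric.ball (c j) r) := closure_mono hVball hwV
      have h3' : dist (c k) (c j) ≤ r :=
        Metric.mem_closedBall.mp (Metric.closure_ball_subset_closedBall h2')
      linarith
    subst hkj
    have hopen : IsOpen (connectedComponentIn U (c k)) := hUopen.connectedComponentIn
    obtain ⟨v, hv1, hv2⟩ :=
      _root_.mem_closure_iff.mp hwV _ hopen (mem_connectedComponentIn (hcU k))
    have e1 := connectedComponentIn_eq hv1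
    have e2 := connectedComponentIn_eq hv2
    rw [e2, ← e1]
    exact mem_connectedComponentIn (hcU k)
  have UballEq : ∀ j, U ∩ Metric.ball (c j) r = connectedComponentIn U (c j) := by
    intro j
    apply Set.Subset.antisymm
    · rintro x ⟨hxU, hxB⟩
      have h := compU x hxU j hxB
      exact (connectedComponentIn_eq h) ▸ mem_connectedComponentIn hxU
    · intro x hx
      refine ⟨connectedComponentIn_subset U (c j) hx, ?_⟩
      exact hsub _ ((connectedComponentIn_subset U (c j)).trans hUS)
        isPreconnected_connectedComponentIn j (c j)
        (mem_connectedComponentIn (hcU j)) (hcb j) hx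
  have SballConn : ∀ j, IsPreconnected (S ∩ Metric.ball (c j) r) := by
    intro j
    have huc : IsPreconnected (U ∩ Metric.ball (c j) r) := by
      rw [UballEq j]; exact isPreconnected_connectedComponentIn
    refine huc.subset_closure (Set.inter_subset_inter_left _ hUS) ?_
    rintro z ⟨hzS, hzB⟩
    have hz1 : ‖p z‖ ≤ 1 := hzS
    rcases lt_or_eq_of_le hz1 with h | h
    · exact subset_closure ⟨h, hzB⟩
    · rw [Metric.mem_closure_iff]
      intro ε hε
      have hrd : 0 < r - dist z (c j) := by
        have := Metric.mem_ball.mp hzB; linarith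
      have hδ : 0 < min ε (r - dist z (c j)) := lt_min hε hrd
      obtain ⟨z', hz'd, hz'n⟩ := s15_lemA hp (h1 j) h hδ
      refine ⟨z', ⟨hz'n, ?_⟩, ?_⟩
      · rw [Metric.mem_ball]
        calc dist z' (c j) ≤ dist z' z + dist z (c j) := dist_triangle _ _ _
          _ < min ε (r - dist z (c j)) + dist z (c j) := by linarith
          _ ≤ (r - dist z (c j)) + dist z (c j) := by
              have := min_le_right ε (r - dist z (c j)); linarith
          _ = r := by ring
      · rw [dist_comm]
        exact lt_of_lt_of_le hz'd (min_le_left _ _)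
  have compS : ∀ z ∈ S, ∀ j, z ∈ Metric.ball (c j) r →
      connectedComponentIn S z = S ∩ Metric.ball (c j) r := by
    intro z hzS j hzB
    apply Set.Subset.antisymm
    · intro x hx
      exact ⟨connectedComponentIn_subset S z hx,
        hsub _ (connectedComponentIn_subset S z) isPreconnected_connectedComponentIn
          j z (mem_connectedComponentIn hzS) hzB hx⟩
    · exact (SballConn j).subset_connectedComponentIn ⟨hzS, hzB⟩ Set.inter_subset_left
  constructor
  · have hrange : {C : Set ℂ | ∃ z ∈ S, C = connectedComponentIn S z} =
        Set.range (fun j : Fin d => S ∩ Metric.ball (c j) r) := by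
      ext C
      constructor
      · rintro ⟨z, hzS, rfl⟩
        obtain ⟨j, hj⟩ := h2 z hzS
        exact ⟨j, (compS z hzS j hj).symm⟩
      · rintro ⟨j, rfl⟩
        exact ⟨c j, hcS j, (compS (c j) (hcS j) j (hcb j)).symm⟩
    have hinj : Function.Injective (fun j : Fin d => S ∩ Metric.ball (c j) r) := by
      intro j k h
      have h' : S ∩ Metric.ball (c j) r = S ∩ Metric.ball (c k) r := h
      have : c j ∈ S ∩ Metric.ball (c k) r := h' ▸ ⟨hcS j, hcb j⟩
      exact hball_ne k j this.2
    rw [hrange, ← Set.image_univ, Set.ncard_image_of_injective _ hinj,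
      Set.ncard_univ, Nat.card_eq_fintype_card, Fintype.card_fin]
  · intro z hzS
    obtain ⟨j, hj⟩ := h2 z hzS
    rw [show connectedComponentIn S z = S ∩ Metric.ball (c j) r from compS z hzS j hj]
    refine ⟨j, ⟨hcS j, hcb j⟩, ?_⟩
    intro k hk
    exact hball_ne j k hk.2

/-- For `p_M(z) = M·(z−1)^{n₁}⋯(z−d)^{n_d}` and all sufficiently large
`M > 0`, the set `P_M = {z : |p_M(z)| ≤ 1}` has exactly `d` connected components, each of
which contains exactly one of the points `1, …, d`. -/
theorem statement15 (d : ℕ) (hd : 1 ≤ d) (nn : Fin d → ℕ) (hnn : ∀ j, 1 ≤ nn j) :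
    ∃ M₀ : ℝ, 0 < M₀ ∧ ∀ M : ℝ, M₀ ≤ M →
      {C : Set ℂ | ∃ z ∈ {z : ℂ | ‖((M : ℂ) *
          ∏ j : Fin d, (z - ((j : ℕ) + 1 : ℂ)) ^ nn j)‖ ≤ 1},
        C = connectedComponentIn
          {z : ℂ | ‖((M : ℂ) *
            ∏ j : Fin d, (z - ((j : ℕ) + 1 : ℂ)) ^ nn j)‖ ≤ 1} z}.ncard = d ∧
      ∀ z ∈ {z : ℂ | ‖((M : ℂ) *
          ∏ j : Fin d, (z - ((j : ℕ) + 1 : ℂ)) ^ nn j)‖ ≤ 1},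
        ∃! j : Fin d, ((j : ℕ) + 1 : ℂ) ∈ connectedComponentIn
          {z : ℂ | ‖((M : ℂ) *
            ∏ j : Fin d, (z - ((j : ℕ) + 1 : ℂ)) ^ nn j)‖ ≤ 1} z := by
  classical
  set N : ℕ := ∑ j, nn j with hN
  refine ⟨2 * 4 ^ N, by positivity, ?_⟩
  intro M hM
  have hM0 : (0 : ℝ) < M := lt_of_lt_of_le (by positivity) hM
  set c : Fin d → ℂ := fun j => ((j : ℕ) + 1 : ℂ) with hc
  set p : ℂ → ℂ := fun z => (M : ℂ) * ∏ j : Fin d, (z - c j) ^ nn j with hp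
  have habs : ∀ z : ℂ, ‖((M : ℂ) * ∏ j : Fin d, (z - c j) ^ nn j)‖ = ‖p z‖ := by
    intro z; simp only [hp]
  have hMC : (M : ℂ) ≠ 0 := by exact_mod_cast ne_of_gt hM0
  -- differentiability
  have hpd : Differentiable ℂ p := by
    rw [hp]
    apply Differentiable.const_mul
    exact Differentiable.fun_finsetProd fun j _ => (differentiable_id.sub_const (c j)).pow (nn j)
  -- zeros
  have h1 : ∀ j, p (c j) = 0 := by
    intro j
    rw [hp]
    simp only
    rw [Finset.prod_eq_zero (Finset.mem_univ j), mul_zero]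
    rw [sub_self]
    exact zero_pow (by have := hnn j; omega)
  -- norm formula
  have hnorm : ∀ z : ℂ, ‖p z‖ = M * ∏ j : Fin d, ‖z - c j‖ ^ nn j := by
    intro z
    rw [hp]
    simp only
    rw [norm_mul, norm_prod]
    congr 1
    · rw [Complex.norm_real, Real.norm_eq_abs, abs_of_pos hM0]
    · exact Finset.prod_congr rfl fun j _ => norm_pow _ _
  -- separation of centres
  have hdist : ∀ j k : Fin d, j ≠ k → 1 ≤ dist (c j) (c k) := by
    intro j k hjk
    have hne : ((j : ℕ) : ℤ) ≠ ((k : ℕ) : ℤ) := by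
      simpa using (Fin.val_injective.ne hjk)
    have h1' : (1 : ℤ) ≤ |((j : ℕ) : ℤ) - ((k : ℕ) : ℤ)| :=
      Int.one_le_abs (sub_ne_zero.mpr hne)
    have heq : c j - c k = ((((j : ℕ) : ℤ) - ((k : ℕ) : ℤ) : ℤ) : ℂ) := by
      rw [hc]; push_cast; ring
    rw [dist_eq_norm, heq]
    rw [Complex.norm_intCast]
    exact_mod_cast h1'
  have h3 : ∀ j k : Fin d, j ≠ k → 2 * (4 : ℝ)⁻¹ ≤ dist (c j) (c k) := by
    intro j k hjk
    have := hdist j k hjk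
    linarith
  -- coverage by small balls
  have h2 : ∀ z : ℂ, ‖p z‖ ≤ 1 → ∃ j, z ∈ Metric.ball (c j) (4 : ℝ)⁻¹ := by
    intro z hz
    by_contra hnot
    push_neg at hnot
    have hbig : ∀ j : Fin d, (4 : ℝ)⁻¹ ≤ ‖z - c j‖ := by
      intro j
      have := hnot j
      rw [Metric.mem_ball, not_lt, dist_eq_norm] at this
      exact this
    have hlow : M * ((4 : ℝ)⁻¹) ^ N ≤ ‖p z‖ := by
      rw [hnorm z]
      have hprod : ((4 : ℝ)⁻¹) ^ N ≤ ∏ j : Fin d, ‖z - c j‖ ^ nn j := by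
        rw [hN, ← Finset.prod_pow_eq_pow_sum]
        exact Finset.prod_le_prod (fun j _ => by positivity)
          (fun j _ => pow_le_pow_left₀ (by norm_num) (hbig j) (nn j))
      exact mul_le_mul_of_nonneg_left hprod hM0.le
    have hgain : (2 : ℝ) ≤ M * ((4 : ℝ)⁻¹) ^ N := by
      have h4N : (0 : ℝ) < ((4 : ℝ)⁻¹) ^ N := by positivity
      calc (2 : ℝ) = (2 * 4 ^ N) * ((4 : ℝ)⁻¹) ^ N := by
            rw [mul_assoc, ← mul_pow]; norm_num
        _ ≤ M * ((4 : ℝ)⁻¹) ^ N := mul_le_mul_of_nonneg_right hM h4N.le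
    linarith
  -- zeros are exactly the centres
  have h4 : ∀ w : ℂ, p w = 0 → ∃ j, w = c j := by
    intro w hw
    rw [hp] at hw
    simp only at hw
    rcases mul_eq_zero.mp hw with h | h
    · exact absurd h hMC
    · obtain ⟨j, _, hj⟩ := Finset.prod_eq_zero_iff.mp h
      refine ⟨j, sub_eq_zero.mp ?_⟩
      exact pow_eq_zero_iff (show nn j ≠ 0 by have := hnn j; omega) |>.mp hj
  -- boundedness
  have hb : Bornology.IsBounded {z : ℂ | ‖p z‖ ≤ 1} := by
    have hsub : {z : ℂ | ‖p z‖ ≤ 1} ⊆ ⋃ j : Fin d, Metric.ball (c j) (4 : ℝ)⁻¹ := by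
      intro z hz
      obtain ⟨j, hj⟩ := h2 z hz
      exact Set.mem_iUnion.mpr ⟨j, hj⟩
    exact (Bornology.isBounded_iUnion.mpr fun j => Metric.isBounded_ball).subset hsub
  exact s15_main (by norm_num) hpd h1 h2 h3 h4 hb
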